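/- Fix an initial state x ∈ ℝ^n, μ ≥ 0, ε ≥ 0, controller parameters α₁ ∈ ℝ^{m×n}, α₂ ∈ ℝ^m, and a horizon N. The following are equivalent: (i) for every disturbance sequence d(0), …, d(N−1) with ‖d(i)‖∞ ≤ μ for all i, the closed-loop trajectory x(0) = x, x(k+1) = A_k x(k) + B_k (α₁ x(k) + α₂) + d(k) satisfies G_k x(k) ≤ H_k for all k = 0, …, N and ‖α₁ x(k) + α₂‖∞ ≤ ε for all k = 0, …, N−1; (ii) there exists a matrix P ∈ ℝ^{((N+1)q + 2mN) × 2n(N+1)} with all entries nonnegative such that P A_b = μ E^{cl}(α₁) and P B_b ≤ F^{cl}(x, α₁, α₂, ε). -/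

import Mathlib

open Matrix Finset

noncomputable section

/-- Ordered product `M (k-1) * M (k-2) * ⋯ * M i` (empty product = identity when `k ≤ i`). -/
def mprod {n : ℕ} (M : ℕ → Matrix (Fin n) (Fin n) ℝ) (i k : ℕ) :
    Matrix (Fin n) (Fin n) ℝ :=
  (((List.range' i (k - i)).reverse).map M).prod

def Abar {n m : ℕ} (A : ℕ → Matrix (Fin n) (Fin n) ℝ) (B : ℕ → Matrix (Fin n) (Fin m) ℝ)
    (α₁ : Matrix (Fin m) (Fin n) ℝ) (j : ℕ) : Matrix (Fin n) (Fin n) ℝ :=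
  A j + B j * α₁

def trajCL {n m : ℕ} (A : ℕ → Matrix (Fin n) (Fin n) ℝ) (B : ℕ → Matrix (Fin n) (Fin m) ℝ)
    (α₁ : Matrix (Fin m) (Fin n) ℝ) (α₂ : Fin m → ℝ) (d : ℕ → Fin n → ℝ)
    (x0 : Fin n → ℝ) : ℕ → Fin n → ℝ
  | 0 => x0
  | k + 1 =>
      (A k).mulVec (trajCL A B α₁ α₂ d x0 k)
        + (B k).mulVec (α₁.mulVec (trajCL A B α₁ α₂ d x0 k) + α₂) + d k

def Eblk {n : ℕ} (N : ℕ) (M : ℕ → Matrix (Fin n) (Fin n) ℝ) (k : ℕ) :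
    Matrix (Fin n) (Fin (N + 1) × Fin n) ℝ :=
  Matrix.of fun r jc =>
    if 1 ≤ (jc.1 : ℕ) ∧ (jc.1 : ℕ) ≤ k then mprod M (jc.1 : ℕ) k r jc.2 else 0

def Fblk {n m : ℕ} (A : ℕ → Matrix (Fin n) (Fin n) ℝ) (B : ℕ → Matrix (Fin n) (Fin m) ℝ)
    (α₁ : Matrix (Fin m) (Fin n) ℝ) (α₂ : Fin m → ℝ) (x : Fin n → ℝ) (k : ℕ) : Fin n → ℝ :=
  (mprod (Abar A B α₁) 0 k).mulVec x
    + ∑ i ∈ Finset.range k, (mprod (Abar A B α₁) (i + 1) k * B i).mulVec α₂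

def Ex {n m q : ℕ} (N : ℕ) (A : ℕ → Matrix (Fin n) (Fin n) ℝ)
    (B : ℕ → Matrix (Fin n) (Fin m) ℝ) (G : ℕ → Matrix (Fin q) (Fin n) ℝ)
    (α₁ : Matrix (Fin m) (Fin n) ℝ) :
    Matrix (Fin (N + 1) × Fin q) (Fin (N + 1) × Fin n) ℝ :=
  Matrix.of fun kr jc => (G (kr.1 : ℕ) * Eblk N (Abar A B α₁) (kr.1 : ℕ)) kr.2 jc

def Fx {n m q : ℕ} (N : ℕ) (A : ℕ → Matrix (Fin n) (Fin n) ℝ)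
    (B : ℕ → Matrix (Fin n) (Fin m) ℝ) (G : ℕ → Matrix (Fin q) (Fin n) ℝ)
    (H : ℕ → Fin q → ℝ) (α₁ : Matrix (Fin m) (Fin n) ℝ) (α₂ : Fin m → ℝ)
    (x : Fin n → ℝ) : Fin (N + 1) × Fin q → ℝ :=
  fun kr => H (kr.1 : ℕ) kr.2 - (G (kr.1 : ℕ)).mulVec (Fblk A B α₁ α₂ x (kr.1 : ℕ)) kr.2

def Au (m : ℕ) : Matrix (Fin m ⊕ Fin m) (Fin m) ℝ := Matrix.fromRows 1 (-1)

def Sk {n m : ℕ} (A : ℕ → Matrix (Fin n) (Fin n) ℝ) (B : ℕ → Matrix (Fin n) (Fin m) ℝ)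
    (α₁ : Matrix (Fin m) (Fin n) ℝ) (α₂ : Fin m → ℝ) (x : Fin n → ℝ) (k : ℕ) : Fin m → ℝ :=
  α₁.mulVec (Fblk A B α₁ α₂ x k) + α₂

def Ecl {n m q : ℕ} (N : ℕ) (A : ℕ → Matrix (Fin n) (Fin n) ℝ)
    (B : ℕ → Matrix (Fin n) (Fin m) ℝ) (G : ℕ → Matrix (Fin q) (Fin n) ℝ)
    (α₁ : Matrix (Fin m) (Fin n) ℝ) :
    Matrix ((Fin (N + 1) × Fin q) ⊕ (Fin N × (Fin m ⊕ Fin m))) (Fin (N + 1) × Fin n) ℝ :=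
  Matrix.fromRows (Ex N A B G α₁)
    (Matrix.of fun kr jc => (Au m * α₁ * Eblk N (Abar A B α₁) (kr.1 : ℕ)) kr.2 jc)

def Fcl {n m q : ℕ} (N : ℕ) (A : ℕ → Matrix (Fin n) (Fin n) ℝ)
    (B : ℕ → Matrix (Fin n) (Fin m) ℝ) (G : ℕ → Matrix (Fin q) (Fin n) ℝ)
    (H : ℕ → Fin q → ℝ) (α₁ : Matrix (Fin m) (Fin n) ℝ) (α₂ : Fin m → ℝ)
    (x : Fin n → ℝ) (ε : ℝ) : (Fin (N + 1) × Fin q) ⊕ (Fin N × (Fin m ⊕ Fin m)) → ℝ :=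
  Sum.elim (Fx N A B G H α₁ α₂ x)
    (fun kr => ε - (Au m).mulVec (Sk A B α₁ α₂ x (kr.1 : ℕ)) kr.2)

def AbM (N n : ℕ) :
    Matrix ((Fin (N + 1) × Fin n) ⊕ (Fin (N + 1) × Fin n)) (Fin (N + 1) × Fin n) ℝ :=
  Matrix.fromRows 1 (-1)

def BbV (N n : ℕ) : (Fin (N + 1) × Fin n) ⊕ (Fin (N + 1) × Fin n) → ℝ := fun _ => 1

def trajOL {n m : ℕ} (A : ℕ → Matrix (Fin n) (Fin n) ℝ) (B : ℕ → Matrix (Fin n) (Fin m) ℝ)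
    (u : ℕ → Fin m → ℝ) (d : ℕ → Fin n → ℝ) (x0 : Fin n → ℝ) : ℕ → Fin n → ℝ
  | 0 => x0
  | k + 1 => (A k).mulVec (trajOL A B u d x0 k) + (B k).mulVec (u k) + d k

def Eol {n q : ℕ} (N : ℕ) (A : ℕ → Matrix (Fin n) (Fin n) ℝ)
    (G : ℕ → Matrix (Fin q) (Fin n) ℝ) :
    Matrix (Fin (N + 1) × Fin q) (Fin (N + 1) × Fin n) ℝ :=
  Matrix.of fun kr jc => (G (kr.1 : ℕ) * Eblk N A (kr.1 : ℕ)) kr.2 jc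

def Fol {n m q : ℕ} (N : ℕ) (A : ℕ → Matrix (Fin n) (Fin n) ℝ)
    (B : ℕ → Matrix (Fin n) (Fin m) ℝ) (G : ℕ → Matrix (Fin q) (Fin n) ℝ)
    (H : ℕ → Fin q → ℝ) (x : Fin n → ℝ) (ut : ℕ → Fin m → ℝ) (ε : ℝ) :
    Fin (N + 1) × Fin q → ℝ :=
  fun kr => H (kr.1 : ℕ) kr.2
    - (G (kr.1 : ℕ)).mulVec ((mprod A 0 (kr.1 : ℕ)).mulVec x) kr.2
    - ε * (G (kr.1 : ℕ)).mulVec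
        (∑ i ∈ Finset.range (kr.1 : ℕ), (mprod A (i + 1) (kr.1 : ℕ) * B i).mulVec (ut i)) kr.2

lemma mprod_of_le {n : ℕ} {M : ℕ → Matrix (Fin n) (Fin n) ℝ} {i k : ℕ} (h : k ≤ i) :
    mprod M i k = 1 := by
  unfold mprod
  rw [Nat.sub_eq_zero_of_le h]
  simp

lemma mprod_succ {n : ℕ} {M : ℕ → Matrix (Fin n) (Fin n) ℝ} {i k : ℕ} (h : i ≤ k) :
    mprod M i (k + 1) = M k * mprod M i k := by
  unfold mprod
  have h1 : k + 1 - i = (k - i) + 1 := by omega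
  have h2 : i + 1 * (k - i) = k := by omega
  rw [h1, List.range'_concat, h2, List.reverse_append]
  simp

lemma trajCL_formula {n m : ℕ} (A : ℕ → Matrix (Fin n) (Fin n) ℝ)
    (B : ℕ → Matrix (Fin n) (Fin m) ℝ) (α₁ : Matrix (Fin m) (Fin n) ℝ) (α₂ : Fin m → ℝ)
    (d : ℕ → Fin n → ℝ) (x : Fin n → ℝ) (k : ℕ) :
    trajCL A B α₁ α₂ d x k = (mprod (Abar A B α₁) 0 k).mulVec x
      + ∑ i ∈ Finset.range k,
          (mprod (Abar A B α₁) (i + 1) k).mulVec ((B i).mulVec α₂ + d i) := by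
  induction k with
  | zero => simp [trajCL, mprod_of_le le_rfl]
  | succ k ih =>
    have step : trajCL A B α₁ α₂ d x (k + 1)
        = (Abar A B α₁ k).mulVec (trajCL A B α₁ α₂ d x k) + ((B k).mulVec α₂ + d k) := by
      show (A k).mulVec _ + (B k).mulVec _ + d k = _
      rw [Matrix.mulVec_add, Abar, Matrix.add_mulVec, ← Matrix.mulVec_mulVec]
      abel
    rw [step, ih, Matrix.mulVec_add]
    have hsum : (Abar A B α₁ k).mulVec (∑ i ∈ Finset.range k,
          (mprod (Abar A B α₁) (i + 1) k).mulVec ((B i).mulVec α₂ + d i))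
        = ∑ i ∈ Finset.range k,
          (mprod (Abar A B α₁) (i + 1) (k + 1)).mulVec ((B i).mulVec α₂ + d i) := by
      rw [← Matrix.mulVecLin_apply, map_sum]
      simp only [Matrix.mulVecLin_apply]
      refine Finset.sum_congr rfl fun i hi => ?_
      rw [Matrix.mulVec_mulVec, ← mprod_succ (by simp at hi; omega)]
    rw [hsum, Matrix.mulVec_mulVec, ← mprod_succ (Nat.zero_le k),
      Finset.sum_range_succ, mprod_of_le le_rfl]
    simp
    abel

def Dvec (N : ℕ) {n : ℕ} (d : ℕ → Fin n → ℝ) : Fin (N + 1) × Fin n → ℝ :=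
  fun jc => if (jc.1 : ℕ) = 0 then 0 else d ((jc.1 : ℕ) - 1) jc.2

lemma Eblk_mulVec {n : ℕ} (N : ℕ) (M : ℕ → Matrix (Fin n) (Fin n) ℝ) (k : ℕ)
    (hk : k ≤ N) (d : ℕ → Fin n → ℝ) :
    (Eblk N M k).mulVec (Dvec N d) = ∑ i ∈ Finset.range k, (mprod M (i + 1) k).mulVec (d i) := by
  have key : ∀ r, (Eblk N M k).mulVec (Dvec N d) r
      = ∑ j ∈ Finset.range (N + 1), (if 1 ≤ j ∧ j ≤ k then (mprod M j k).mulVec (d (j - 1)) r else 0) := by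
    intro r
    rw [Matrix.mulVec, dotProduct, Fintype.sum_prod_type]
    rw [← Fin.sum_univ_eq_sum_range
      (fun j => if 1 ≤ j ∧ j ≤ k then (mprod M j k).mulVec (d (j - 1)) r else 0) (N + 1)]
    refine Finset.sum_congr rfl fun j _ => ?_
    by_cases hj : 1 ≤ (j : ℕ) ∧ (j : ℕ) ≤ k
    · rw [if_pos hj]
      rw [Matrix.mulVec, dotProduct]
      refine Finset.sum_congr rfl fun c _ => ?_
      simp only [Eblk, Matrix.of_apply, if_pos hj, Dvec]
      rw [if_neg (by omega)]
    · rw [if_neg hj]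
      refine Finset.sum_eq_zero fun c _ => ?_
      simp only [Eblk, Matrix.of_apply, if_neg hj, zero_mul]
  funext r
  rw [key r]
  have h2 : ∑ j ∈ Finset.range (N + 1), (if 1 ≤ j ∧ j ≤ k then (mprod M j k).mulVec (d (j - 1)) r else 0)
      = ∑ j ∈ Finset.Ico 1 (k + 1), (mprod M j k).mulVec (d (j - 1)) r := by
    rw [← Finset.sum_subset (show Finset.Ico 1 (k+1) ⊆ Finset.range (N+1) by
        intro j hj; simp only [Finset.mem_Ico] at hj; simp only [Finset.mem_range]; omega)
      (fun j hj hnj => by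
        rw [if_neg]; simp only [Finset.mem_range] at hj; simp only [Finset.mem_Ico] at hnj; omega)]
    exact Finset.sum_congr rfl fun j hj => by
      rw [if_pos]; simp only [Finset.mem_Ico] at hj; omega
  rw [h2, Finset.sum_Ico_eq_sum_range]
  simp only [add_tsub_cancel_left, Nat.add_sub_cancel, Finset.sum_apply]
  exact Finset.sum_congr rfl fun i _ => by rw [add_comm 1 i]

lemma traj_decomp {n m : ℕ} (N : ℕ) (A : ℕ → Matrix (Fin n) (Fin n) ℝ)
    (B : ℕ → Matrix (Fin n) (Fin m) ℝ) (α₁ : Matrix (Fin m) (Fin n) ℝ) (α₂ : Fin m → ℝ)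
    (d : ℕ → Fin n → ℝ) (x : Fin n → ℝ) (k : ℕ) (hk : k ≤ N) :
    trajCL A B α₁ α₂ d x k
      = Fblk A B α₁ α₂ x k + (Eblk N (Abar A B α₁) k).mulVec (Dvec N d) := by
  rw [trajCL_formula, Eblk_mulVec N _ k hk, Fblk]
  rw [show ∀ s : Finset ℕ, ∑ i ∈ s, (mprod (Abar A B α₁) (i + 1) k).mulVec ((B i).mulVec α₂ + d i)
      = ∑ i ∈ s, ((mprod (Abar A B α₁) (i + 1) k * B i).mulVec α₂
          + (mprod (Abar A B α₁) (i + 1) k).mulVec (d i)) from fun s => Finset.sum_congr rfl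
        fun i _ => by rw [Matrix.mulVec_add, Matrix.mulVec_mulVec]]
  rw [Finset.sum_add_distrib]
  abel

lemma mul_fromRows_apply {ι κ : Type*} [Fintype ι] [DecidableEq ι]
    (P : Matrix κ (ι ⊕ ι) ℝ) (r : κ) (j : ι) :
    ((P * Matrix.fromRows (1 : Matrix ι ι ℝ) (-1) : Matrix κ ι ℝ)) r j
      = P r (Sum.inl j) - P r (Sum.inr j) := by
  change (∑ k, P r k * Matrix.fromRows (1 : Matrix ι ι ℝ) (-1) k j) = _
  rw [Fintype.sum_sum_type]
  simp [Matrix.one_apply, mul_ite, Finset.sum_ite_eq', sub_eq_add_neg]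

lemma farkas_rows {ι κ : Type*} [Fintype ι] [DecidableEq ι] [Fintype κ]
    (E : Matrix κ ι ℝ) (F : κ → ℝ) (μ : ℝ) (hμ : 0 ≤ μ) :
    (∀ r, μ * ∑ j, |E r j| ≤ F r) ↔
      ∃ P : Matrix κ (ι ⊕ ι) ℝ, (∀ i j, 0 ≤ P i j) ∧
        P * Matrix.fromRows (1 : Matrix ι ι ℝ) (-1) = μ • E ∧
        P.mulVec (fun _ => 1) ≤ F := by
  constructor
  · intro h
    refine ⟨Matrix.of fun r s => Sum.elim (fun j => μ * max (E r j) 0)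
      (fun j => μ * max (-E r j) 0) s, ?_, ?_, ?_⟩
    · rintro r (j | j) <;>
        exact mul_nonneg hμ (le_max_right _ _)
    · ext r j
      rw [mul_fromRows_apply]
      simp only [Matrix.of_apply, Sum.elim_inl, Sum.elim_inr, Matrix.smul_apply, smul_eq_mul]
      rw [← mul_sub, max_zero_sub_max_neg_zero_eq_self]
    · intro r
      rw [Matrix.mulVec, dotProduct, Fintype.sum_sum_type]
      simp only [Matrix.of_apply, Sum.elim_inl, Sum.elim_inr, mul_one]
      rw [← Finset.sum_add_distrib]
      calc ∑ j, (μ * max (E r j) 0 + μ * max (-E r j) 0)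
          = μ * ∑ j, |E r j| := by
            rw [Finset.mul_sum]
            exact Finset.sum_congr rfl fun j _ => by
              rw [← mul_add, max_zero_add_max_neg_zero_eq_abs_self]
        _ ≤ F r := h r
  · rintro ⟨P, hP, hEq, hLe⟩ r
    have hrow : ∀ j, P r (Sum.inl j) - P r (Sum.inr j) = μ * E r j := by
      intro j
      have := congrFun (congrFun hEq r) j
      rwa [mul_fromRows_apply] at this
    calc μ * ∑ j, |E r j| = ∑ j, |μ * E r j| := by
          rw [Finset.mul_sum]
          exact Finset.sum_congr rfl fun j _ => by rw [abs_mul, abs_of_nonneg hμ]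
      _ ≤ ∑ j, (P r (Sum.inl j) + P r (Sum.inr j)) := by
          refine Finset.sum_le_sum fun j _ => ?_
          rw [← hrow j]
          exact (abs_sub _ _).trans_eq (by
            rw [abs_of_nonneg (hP r _), abs_of_nonneg (hP r _)])
      _ = P.mulVec (fun _ => 1) r := by
          rw [Matrix.mulVec, dotProduct, Fintype.sum_sum_type, ← Finset.sum_add_distrib]
          simp
      _ ≤ F r := hLe r

lemma Au_mulVec_le_iff {m : ℕ} (v : Fin m → ℝ) {ε : ℝ} (hε : 0 ≤ ε) :
    (∀ s, (Au m).mulVec v s ≤ ε) ↔ ‖v‖ ≤ ε := by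
  rw [pi_norm_le_iff_of_nonneg hε]
  constructor
  · intro h i
    rw [Real.norm_eq_abs, abs_le]
    refine ⟨?_, ?_⟩
    · have := h (Sum.inr i)
      simp [Au, Matrix.fromRows_mulVec, Matrix.neg_mulVec, Matrix.one_mulVec] at this
      linarith
    · have := h (Sum.inl i)
      simpa [Au, Matrix.fromRows_mulVec, Matrix.one_mulVec] using this
  · rintro h (i | i)
    · have := (abs_le.1 ((Real.norm_eq_abs _) ▸ h i)).2
      simpa [Au, Matrix.fromRows_mulVec, Matrix.one_mulVec] using this
    · have := (abs_le.1 ((Real.norm_eq_abs _) ▸ h i)).1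
      simp [Au, Matrix.fromRows_mulVec, Matrix.neg_mulVec, Matrix.one_mulVec]
      linarith

lemma Eblk_col0 {n N : ℕ} (M : ℕ → Matrix (Fin n) (Fin n) ℝ) (k : ℕ) (r : Fin n)
    (jc : Fin (N + 1) × Fin n) (h : (jc.1 : ℕ) = 0) : Eblk N M k r jc = 0 := by
  simp only [Eblk, Matrix.of_apply]
  rw [if_neg (by omega)]

lemma Ecl_col0 {n m q N : ℕ} (A : ℕ → Matrix (Fin n) (Fin n) ℝ)
    (B : ℕ → Matrix (Fin n) (Fin m) ℝ) (G : ℕ → Matrix (Fin q) (Fin n) ℝ)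
    (α₁ : Matrix (Fin m) (Fin n) ℝ)
    (row : (Fin (N + 1) × Fin q) ⊕ (Fin N × (Fin m ⊕ Fin m)))
    (jc : Fin (N + 1) × Fin n) (h : (jc.1 : ℕ) = 0) :
    Ecl N A B G α₁ row jc = 0 := by
  rcases row with ⟨k, r⟩ | ⟨k, s⟩
  · show (G (k : ℕ) * Eblk N (Abar A B α₁) (k : ℕ)) r jc = 0
    rw [Matrix.mul_apply]
    exact Finset.sum_eq_zero fun c _ => by rw [Eblk_col0 _ _ _ _ h, mul_zero]
  · show (Au m * α₁ * Eblk N (Abar A B α₁) (k : ℕ)) s jc = 0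
    rw [Matrix.mul_apply]
    exact Finset.sum_eq_zero fun c _ => by rw [Eblk_col0 _ _ _ _ h, mul_zero]

lemma Ecl_row_sum_inl {n m q N : ℕ} (A : ℕ → Matrix (Fin n) (Fin n) ℝ)
    (B : ℕ → Matrix (Fin n) (Fin m) ℝ) (G : ℕ → Matrix (Fin q) (Fin n) ℝ)
    (α₁ : Matrix (Fin m) (Fin n) ℝ) (k : Fin (N + 1)) (r : Fin q)
    (D : Fin (N + 1) × Fin n → ℝ) :
    ∑ jc, Ecl N A B G α₁ (Sum.inl (k, r)) jc * D jc
      = (G (k : ℕ)).mulVec ((Eblk N (Abar A B α₁) (k : ℕ)).mulVec D) r := by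
  rw [Matrix.mulVec_mulVec]
  rfl

lemma Ecl_row_sum_inr {n m q N : ℕ} (A : ℕ → Matrix (Fin n) (Fin n) ℝ)
    (B : ℕ → Matrix (Fin n) (Fin m) ℝ) (G : ℕ → Matrix (Fin q) (Fin n) ℝ)
    (α₁ : Matrix (Fin m) (Fin n) ℝ) (k : Fin N) (s : Fin m ⊕ Fin m)
    (D : Fin (N + 1) × Fin n → ℝ) :
    ∑ jc, Ecl N A B G α₁ (Sum.inr (k, s)) jc * D jc
      = (Au m).mulVec (α₁.mulVec ((Eblk N (Abar A B α₁) (k : ℕ)).mulVec D)) s := by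
  rw [Matrix.mulVec_mulVec, Matrix.mulVec_mulVec]
  rfl

lemma constraint_iff {n m q N : ℕ} (A : ℕ → Matrix (Fin n) (Fin n) ℝ)
    (B : ℕ → Matrix (Fin n) (Fin m) ℝ) (G : ℕ → Matrix (Fin q) (Fin n) ℝ)
    (H : ℕ → Fin q → ℝ) (x : Fin n → ℝ) {ε : ℝ} (hε : 0 ≤ ε)
    (α₁ : Matrix (Fin m) (Fin n) ℝ) (α₂ : Fin m → ℝ) (d : ℕ → Fin n → ℝ) :
    ((∀ k, k ≤ N → (G k).mulVec (trajCL A B α₁ α₂ d x k) ≤ H k) ∧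
      (∀ k, k < N → ‖α₁.mulVec (trajCL A B α₁ α₂ d x k) + α₂‖ ≤ ε)) ↔
    (∀ row, ∑ jc, Ecl N A B G α₁ row jc * Dvec N d jc
        ≤ Fcl N A B G H α₁ α₂ x ε row) := by
  rw [Sum.forall]
  constructor
  · rintro ⟨h1, h2⟩
    refine ⟨?_, ?_⟩
    · rintro ⟨k, r⟩
      rw [Ecl_row_sum_inl]
      have hk : (k : ℕ) ≤ N := by omega
      have := h1 (k : ℕ) hk r
      rw [traj_decomp N A B α₁ α₂ d x _ hk, Matrix.mulVec_add] at this
      show _ ≤ Fx N A B G H α₁ α₂ x (k, r)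
      simp only [Fx, Pi.add_apply] at this ⊢
      linarith
    · rintro ⟨k, s⟩
      rw [Ecl_row_sum_inr]
      have hk : (k : ℕ) ≤ N := by omega
      have h := ((Au_mulVec_le_iff _ hε).2 (h2 (k : ℕ) k.isLt)) s
      rw [traj_decomp N A B α₁ α₂ d x _ hk] at h
      simp only [Fcl, Sum.elim_inr, Sk, Matrix.mulVec_add, Pi.add_apply] at h ⊢
      linarith
  · rintro ⟨h1, h2⟩
    refine ⟨?_, ?_⟩
    · intro k hk r
      have h := h1 (⟨k, by omega⟩, r)
      rw [Ecl_row_sum_inl] at h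
      rw [traj_decomp N A B α₁ α₂ d x k hk]
      simp only [Fcl, Sum.elim_inl, Fx, Matrix.mulVec_add, Pi.add_apply, Fin.val_mk] at h ⊢
      linarith
    · intro k hk
      refine (Au_mulVec_le_iff _ hε).1 fun s => ?_
      have h := h2 (⟨k, hk⟩, s)
      rw [Ecl_row_sum_inr] at h
      show (Au m).mulVec (α₁.mulVec (trajCL A B α₁ α₂ d x k) + α₂) s ≤ ε
      rw [traj_decomp N A B α₁ α₂ d x k (le_of_lt hk)]
      simp only [Fcl, Sum.elim_inr, Sk, Matrix.mulVec_add, Pi.add_apply, Fin.val_mk] at h ⊢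
      linarith

lemma Dvec_abs_le {n N : ℕ} {d : ℕ → Fin n → ℝ} {μ : ℝ} (hμ : 0 ≤ μ)
    (hd : ∀ i, i < N → ‖d i‖ ≤ μ) (jc : Fin (N + 1) × Fin n) : |Dvec N d jc| ≤ μ := by
  by_cases h : (jc.1 : ℕ) = 0
  · simp [Dvec, h, hμ]
  · have h1 : (jc.1 : ℕ) - 1 < N := by have := jc.1.isLt; omega
    calc |Dvec N d jc| = |d ((jc.1 : ℕ) - 1) jc.2| := by rw [Dvec, if_neg h]
      _ ≤ ‖d ((jc.1 : ℕ) - 1)‖ := by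
          rw [← Real.norm_eq_abs]; exact norm_le_pi_norm _ _
      _ ≤ μ := hd _ h1

lemma lhs_iff_rows {n m q N : ℕ} (A : ℕ → Matrix (Fin n) (Fin n) ℝ)
    (B : ℕ → Matrix (Fin n) (Fin m) ℝ) (G : ℕ → Matrix (Fin q) (Fin n) ℝ)
    (H : ℕ → Fin q → ℝ) (x : Fin n → ℝ) {μ ε : ℝ} (hμ : 0 ≤ μ) (hε : 0 ≤ ε)
    (α₁ : Matrix (Fin m) (Fin n) ℝ) (α₂ : Fin m → ℝ) :
    (∀ d : ℕ → Fin n → ℝ, (∀ i, i < N → ‖d i‖ ≤ μ) →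
        (∀ k, k ≤ N → (G k).mulVec (trajCL A B α₁ α₂ d x k) ≤ H k) ∧
        (∀ k, k < N → ‖α₁.mulVec (trajCL A B α₁ α₂ d x k) + α₂‖ ≤ ε)) ↔
    (∀ row, μ * ∑ jc, |Ecl N A B G α₁ row jc| ≤ Fcl N A B G H α₁ α₂ x ε row) := by
  constructor
  · intro hL row
    set d : ℕ → Fin n → ℝ := fun i c =>
      if h : i + 1 ≤ N then
        (if 0 ≤ Ecl N A B G α₁ row (⟨i + 1, by omega⟩, c) then μ else -μ) else 0 with hd_def
    have hd : ∀ i, i < N → ‖d i‖ ≤ μ := by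
      intro i hi
      rw [pi_norm_le_iff_of_nonneg hμ]
      intro c
      rw [Real.norm_eq_abs, hd_def]
      simp only [dif_pos (by omega : i + 1 ≤ N)]
      split <;> simp [abs_of_nonneg hμ, hμ]
    have key := ((constraint_iff A B G H x hε α₁ α₂ d).1 (hL d hd)) row
    have heq : ∑ jc, Ecl N A B G α₁ row jc * Dvec N d jc
        = μ * ∑ jc, |Ecl N A B G α₁ row jc| := by
      rw [Finset.mul_sum]
      refine Finset.sum_congr rfl fun jc _ => ?_
      by_cases h0 : (jc.1 : ℕ) = 0
      · rw [Ecl_col0 A B G α₁ row jc h0]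
        simp
      · have h1 : ((jc.1 : ℕ) - 1) + 1 ≤ N := by have := jc.1.isLt; omega
        have hfin : (⟨((jc.1 : ℕ) - 1) + 1, by omega⟩ : Fin (N + 1)) = jc.1 := by
          apply Fin.ext; simp; omega
        have hD : Dvec N d jc = if 0 ≤ Ecl N A B G α₁ row jc then μ else -μ := by
          rw [Dvec, if_neg h0, hd_def]
          simp only [dif_pos h1]
          rw [hfin]
        rw [hD]
        rcases le_or_gt 0 (Ecl N A B G α₁ row jc) with h | h
        · rw [if_pos h, abs_of_nonneg h]; ring
        · rw [if_neg (not_le.2 h), abs_of_neg h]; ring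
    rw [← heq]
    exact key
  · intro hR d hd
    rw [constraint_iff A B G H x hε α₁ α₂ d]
    intro row
    calc ∑ jc, Ecl N A B G α₁ row jc * Dvec N d jc
        ≤ ∑ jc, |Ecl N A B G α₁ row jc| * μ := by
          refine Finset.sum_le_sum fun jc _ => ?_
          calc Ecl N A B G α₁ row jc * Dvec N d jc
              ≤ |Ecl N A B G α₁ row jc * Dvec N d jc| := le_abs_self _
            _ = |Ecl N A B G α₁ row jc| * |Dvec N d jc| := abs_mul _ _
            _ ≤ |Ecl N A B G α₁ row jc| * μ :=
                mul_le_mul_of_nonneg_left (Dvec_abs_le hμ hd jc) (abs_nonneg _)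
      _ = μ * ∑ jc, |Ecl N A B G α₁ row jc| := by rw [Finset.mul_sum]; exact Finset.sum_congr rfl fun jc _ => mul_comm _ _
      _ ≤ Fcl N A B G H α₁ α₂ x ε row := hR row

/-- State-and-input robust condition ↔ Farkas certificate, for the closed-loop LTV system
with linear controller `u(k) = α₁ x(k) + α₂`, polytopic specification
`G_k x(k) ≤ H_k` for `k = 0, …, N`, input bound `‖α₁ x(k) + α₂‖∞ ≤ ε` for
`k = 0, …, N-1`, and disturbances with `‖d(i)‖∞ ≤ μ`. -/
theorem resilience_effort_farkas {n m q N : ℕ}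
    (A : ℕ → Matrix (Fin n) (Fin n) ℝ) (B : ℕ → Matrix (Fin n) (Fin m) ℝ)
    (G : ℕ → Matrix (Fin q) (Fin n) ℝ) (H : ℕ → Fin q → ℝ)
    (x : Fin n → ℝ) (μ ε : ℝ) (hμ : 0 ≤ μ) (hε : 0 ≤ ε)
    (α₁ : Matrix (Fin m) (Fin n) ℝ) (α₂ : Fin m → ℝ) :
    (∀ d : ℕ → Fin n → ℝ, (∀ i, i < N → ‖d i‖ ≤ μ) →
        (∀ k, k ≤ N → (G k).mulVec (trajCL A B α₁ α₂ d x k) ≤ H k) ∧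
        (∀ k, k < N → ‖α₁.mulVec (trajCL A B α₁ α₂ d x k) + α₂‖ ≤ ε)) ↔
      (∃ P : Matrix ((Fin (N + 1) × Fin q) ⊕ (Fin N × (Fin m ⊕ Fin m)))
          ((Fin (N + 1) × Fin n) ⊕ (Fin (N + 1) × Fin n)) ℝ,
        (∀ i j, 0 ≤ P i j) ∧
        P * AbM N n = μ • Ecl N A B G α₁ ∧
        P.mulVec (BbV N n) ≤ Fcl N A B G H α₁ α₂ x ε) :=
  (lhs_iff_rows A B G H x hμ hε α₁ α₂).trans
    (farkas_rows (Ecl N A B G α₁) (Fcl N A B G H α₁ α₂ x ε) μ hμ)
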